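/- For all integers n ≥ 1 and δ ≥ 1 there exists a constant c = c(n,δ) ≥ 0 with the following property. Suppose G is an almost torsion-free group with a finite generating set S of n elements whose Cayley graph X = Γ(G,S) is δ-hyperbolic. Then for every nontrivial finite subgroup U ≤ G, the diameter of the convex hull X(U) (formed in X relative to the constant δ) is at most c(n,δ). -/

import Mathlib

noncomputable section

namespace KW

open Metric Set Pointwise

variable {X : Type*} [MetricSpace X]

/-- `s` is (the image of) a unit-speed geodesic segment joining `x` to `y`. -/
def IsGeodesicSegment (s : Set X) (x y : X) : Prop :=
  ∃ (b : ℝ) (f : ℝ → X), 0 ≤ b ∧ f 0 = x ∧ f b = y ∧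
    (∀ u ∈ Set.Icc (0 : ℝ) b, ∀ v ∈ Set.Icc (0 : ℝ) b, dist (f u) (f v) = |u - v|) ∧
    s = f '' Set.Icc 0 b

/-- A geodesic metric space. -/
def GeodesicSpace (X : Type*) [MetricSpace X] : Prop :=
  ∀ x y : X, ∃ s : Set X, IsGeodesicSegment s x y

/-- `X` is `δ`-hyperbolic: geodesic, and every geodesic triangle is `δ`-thin. -/
def DeltaHyperbolic (δ : ℝ) (X : Type*) [MetricSpace X] : Prop :=
  GeodesicSpace X ∧
    ∀ (x y z : X) (s₁ s₂ s₃ : Set X),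
      IsGeodesicSegment s₁ x y → IsGeodesicSegment s₂ y z → IsGeodesicSegment s₃ x z →
      ∀ p ∈ s₁, ∃ q ∈ s₂ ∪ s₃, dist p q ≤ δ

/-- `A` is an `ε`-quasiconvex subset of `X`. -/
def Quasiconvex (ε : ℝ) (A : Set X) : Prop :=
  ∀ x ∈ A, ∀ y ∈ A, ∀ s : Set X, IsGeodesicSegment s x y → ∀ p ∈ s, ∃ a ∈ A, dist p a ≤ ε

/-- The Gromov product `(y,z)_x`. -/
def gromov (x y z : X) : ℝ := (dist y x + dist z x - dist y z) / 2

def IsGeodesicRay (γ : ℝ → X) : Prop :=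
  ∀ s t : ℝ, 0 ≤ s → 0 ≤ t → dist (γ s) (γ t) = |s - t|

def IsBiGeodesic (γ : ℝ → X) : Prop :=
  ∀ s t : ℝ, dist (γ s) (γ t) = |s - t|

/-- `A` and `B` are `K`-Hausdorff close. -/
def HClose (K : ℝ) (A B : Set X) : Prop :=
  (∀ a ∈ A, ∃ b ∈ B, dist a b ≤ K) ∧ ∀ b ∈ B, ∃ a ∈ A, dist a b ≤ K

def HausdorffClose (A B : Set X) : Prop := ∃ K : ℝ, HClose K A B

/-- Two geodesic rays are asymptotic iff their images are Hausdorff close. -/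
def Asymptotic (γ γ' : ℝ → X) : Prop :=
  HausdorffClose (γ '' Set.Ici 0) (γ' '' Set.Ici 0)

def GRay (X : Type*) [MetricSpace X] : Type _ := {γ : ℝ → X // IsGeodesicRay γ}

theorem asymptotic_refl (γ : ℝ → X) : Asymptotic γ γ :=
  ⟨0, fun a ha => ⟨a, ha, by simp⟩, fun b hb => ⟨b, hb, by simp⟩⟩

theorem asymptotic_symm {γ γ' : ℝ → X} (h : Asymptotic γ γ') : Asymptotic γ' γ := by
  obtain ⟨K, h₁, h₂⟩ := h
  refine ⟨K, fun a ha => ?_, fun b hb => ?_⟩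
  · obtain ⟨b, hb, hd⟩ := h₂ a ha
    exact ⟨b, hb, by rwa [dist_comm]⟩
  · obtain ⟨a, ha, hd⟩ := h₁ b hb
    exact ⟨a, ha, by rwa [dist_comm]⟩

theorem asymptotic_trans {γ₁ γ₂ γ₃ : ℝ → X} (h : Asymptotic γ₁ γ₂)
    (h' : Asymptotic γ₂ γ₃) : Asymptotic γ₁ γ₃ := by
  obtain ⟨K, h₁, h₂⟩ := h
  obtain ⟨K', h₁', h₂'⟩ := h'
  refine ⟨K + K', fun a ha => ?_, fun c hc => ?_⟩
  · obtain ⟨b, hb, hab⟩ := h₁ a ha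
    obtain ⟨c, hc, hbc⟩ := h₁' b hb
    exact ⟨c, hc, (dist_triangle a b c).trans (by linarith)⟩
  · obtain ⟨b, hb, hbc⟩ := h₂' c hc
    obtain ⟨a, ha, hab⟩ := h₂ b hb
    exact ⟨a, ha, (dist_triangle a b c).trans (by linarith)⟩

def raySetoid (X : Type*) [MetricSpace X] : Setoid (GRay X) where
  r γ γ' := Asymptotic γ.1 γ'.1
  iseqv := ⟨fun γ => asymptotic_refl γ.1, fun h => asymptotic_symm h,
    fun h h' => asymptotic_trans h h'⟩

/-- The (geodesic) boundary of `X`: asymptoty classes of geodesic rays. -/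
def Boundary (X : Type*) [MetricSpace X] : Type _ := Quotient (raySetoid X)

def Boundary.mk {X : Type*} [MetricSpace X] (γ : GRay X) : Boundary X :=
  Quotient.mk (raySetoid X) γ

/-- A strongly geodesic metric space. -/
def StronglyGeodesic (X : Type*) [MetricSpace X] : Prop :=
  GeodesicSpace X ∧
  (∀ γ : ℝ → X, IsGeodesicRay γ → ∀ y : X,
      ∃ γ' : ℝ → X, IsGeodesicRay γ' ∧ γ' 0 = y ∧ Asymptotic γ γ') ∧
  (∀ γ₁ γ₂ : ℝ → X, IsGeodesicRay γ₁ → IsGeodesicRay γ₂ → γ₁ 0 = γ₂ 0 →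
      ¬ Asymptotic γ₁ γ₂ →
      ∃ γ : ℝ → X, IsBiGeodesic γ ∧
        HausdorffClose (Set.range γ) (γ₁ '' Set.Ici 0 ∪ γ₂ '' Set.Ici 0)) ∧
  (∀ (x : X) (u : ℕ → X),
      (∀ M : ℝ, ∃ N : ℕ, ∀ n, N ≤ n → ∀ m, N ≤ m → M ≤ gromov x (u n) (u m)) →
      ∃ γ : ℝ → X, IsGeodesicRay γ ∧ γ 0 = x ∧
        ∀ M : ℝ, ∃ N : ℕ, ∀ n, N ≤ n → ∀ m, N ≤ m → M ≤ gromov x (γ (n : ℝ)) (u m))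

/-- The sequence `u` converges to the boundary point `p`, with basepoint `x`. -/
def SeqConvTo (x : X) (u : ℕ → X) (p : Boundary X) : Prop :=
  ∃ γ : GRay X, Boundary.mk γ = p ∧
    ∀ M : ℝ, ∃ N : ℕ, ∀ n, N ≤ n → ∀ m, N ≤ m → M ≤ gromov x (u n) (γ.1 (m : ℝ))

/-- `γ` is a geodesic ray in the class of the boundary point `p`. -/
def RayTo (γ : ℝ → X) (p : Boundary X) : Prop :=
  ∃ h : IsGeodesicRay γ, Boundary.mk ⟨γ, h⟩ = p

/-- `γ` is a biinfinite geodesic whose two ends converge to `p` and `q`. -/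
def BiGeodesicJoins (γ : ℝ → X) (p q : Boundary X) : Prop :=
  IsBiGeodesic γ ∧ SeqConvTo (γ 0) (fun n => γ (-(n : ℝ))) p ∧
    SeqConvTo (γ 0) (fun n => γ (n : ℝ)) q

/-- `s` is (the image of) a geodesic joining two points of `X ∪ ∂X`. -/
def JoinSet : X ⊕ Boundary X → X ⊕ Boundary X → Set X → Prop
  | Sum.inl x, Sum.inl y, s => IsGeodesicSegment s x y
  | Sum.inl x, Sum.inr p, s => ∃ γ : ℝ → X, γ 0 = x ∧ RayTo γ p ∧ s = γ '' Set.Ici 0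
  | Sum.inr p, Sum.inl x, s => ∃ γ : ℝ → X, γ 0 = x ∧ RayTo γ p ∧ s = γ '' Set.Ici 0
  | Sum.inr p, Sum.inr q, s => ∃ γ : ℝ → X, BiGeodesicJoins γ p q ∧ s = Set.range γ

/-- The convex hull `Conv(A)` of a subset `A ⊆ X ∪ ∂X`. -/
def geoConv (A : Set (X ⊕ Boundary X)) : Set X :=
  {x | (∃ a : X, A = {Sum.inl a} ∧ x = a) ∨
    ∃ p ∈ A, ∃ q ∈ A, p ≠ q ∧ ∃ s : Set X, JoinSet p q s ∧ x ∈ s}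

/-- The distance between two subsets of `X`. -/
def setDist (A B : Set X) : ℝ := sInf (Set.image2 dist A B)

/-- `a` is a projection of `p` on `A` (relative to `δ`). -/
def IsProjection (δ : ℝ) (A : Set X) (p a : X) : Prop :=
  a ∈ A ∧ ∀ a' ∈ A, dist p a ≤ dist p a' + δ

/-- `f` restricted to `[0,L]` is a unit-speed geodesic from `x` to `y`. -/
def GeodParam (f : ℝ → X) (L : ℝ) (x y : X) : Prop :=
  0 ≤ L ∧ f 0 = x ∧ f L = y ∧
    ∀ u ∈ Set.Icc (0 : ℝ) L, ∀ v ∈ Set.Icc (0 : ℝ) L, dist (f u) (f v) = |u - v|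

/-- Concatenation of three paths, the first on `[0,a]`, the second on `[0,b]`. -/
def concat3 (f₁ f₂ f₃ : ℝ → X) (a b : ℝ) : ℝ → X := fun t =>
  if t ≤ a then f₁ t else if t ≤ a + b then f₂ (t - a) else f₃ (t - a - b)

/-- `f` is a `(lam, ε)`-quasigeodesic on `[a,b]`. -/
def QuasigeodesicOn (lam ε : ℝ) (f : ℝ → X) (a b : ℝ) : Prop :=
  ∀ s ∈ Set.Icc a b, ∀ t ∈ Set.Icc a b, |s - t| ≤ lam * dist (f s) (f t) + ε

/-- The action of `G` on `X` is by isometries. -/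
def IsometricAction (G Y : Type*) [Group G] [MetricSpace Y] [MulAction G Y] : Prop :=
  ∀ (g : G) (x y : Y), dist (g • x) (g • y) = dist x y

section GroupAction

variable {G : Type*} [Group G]

/-- The limit set `Λ(U) ⊆ ∂X` of a subgroup `U ≤ G`. -/
def limitSet (X : Type*) [MetricSpace X] [MulAction G X] (U : Subgroup G) :
    Set (Boundary X) :=
  {p | ∃ x₀ : X, ∃ u : ℕ → U, SeqConvTo x₀ (fun n => ((u n : G)) • x₀) p}

/-- The small displacement set `E(U)` (relative to `δ`). -/
def smallDispSet (X : Type*) [MetricSpace X] [MulAction G X] (δ : ℝ) (U : Subgroup G) :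
    Set X :=
  {x | ∃ u : G, u ∈ U ∧ u ≠ 1 ∧ dist x (u • x) ≤ 100 * δ}

/-- `Z(U) = Conv(Λ(U) ∪ E(U))`. -/
def ZSet (X : Type*) [MetricSpace X] [MulAction G X] (δ : ℝ) (U : Subgroup G) : Set X :=
  geoConv (Sum.inr '' limitSet X U ∪ Sum.inl '' smallDispSet X δ U)

/-- The convex hull `X(U)`: the closure of `Conv(Z(U))`. -/
def cHull (X : Type*) [MetricSpace X] [MulAction G X] (δ : ℝ) (U : Subgroup G) : Set X :=
  closure (geoConv (Sum.inl '' ZSet X δ U))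

/-- The weak convex hull `X_U = Conv(Λ(U))`. -/
def weakHull (X : Type*) [MetricSpace X] [MulAction G X] (U : Subgroup G) : Set X :=
  geoConv (Sum.inr '' limitSet X U)

/-- `l_V(g) = d(X(V), gX(V))`. -/
def lV (X : Type*) [MetricSpace X] [MulAction G X] (δ : ℝ) (V : Subgroup G) (g : G) : ℝ :=
  setDist (cHull X δ V) (g • cHull X δ V)

/-- The translation length of `g`. -/
def translationLength (X : Type*) [MetricSpace X] [MulAction G X] (g : G) : ℝ :=
  sInf (Set.range fun x : X => dist x (g • x))

/-- The asymptotic translation length of `g`. -/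
def asympTranslationLength (X : Type*) [MetricSpace X] [MulAction G X] (g : G) : ℝ :=
  Filter.liminf (fun n : ℕ => translationLength X (g ^ n) / (n : ℝ)) Filter.atTop

/-- An elementary move between `G`-tuples `(U₁,…,U_n; h₁,…,h_m)`. -/
def gMove {n m : ℕ} (M M' : (Fin n → Subgroup G) × (Fin m → G)) : Prop :=
  (M'.2 = M.2 ∧ ∃ (j : Fin n) (g : G),
      g ∈ Subgroup.closure (Set.range M.2 ∪ ⋃ i ∈ {i : Fin n | i ≠ j}, ((M.1 i : Set G))) ∧
      (∀ i, i ≠ j → M'.1 i = M.1 i) ∧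
      M'.1 j = Subgroup.map (MulAut.conj g).toMonoidHom (M.1 j)) ∨
  (M'.1 = M.1 ∧ ∃ (i : Fin m) (g₁ g₂ : G),
      g₁ ∈ Subgroup.closure (M.2 '' {j : Fin m | j ≠ i} ∪ ⋃ t, ((M.1 t : Set G))) ∧
      g₂ ∈ Subgroup.closure (M.2 '' {j : Fin m | j ≠ i} ∪ ⋃ t, ((M.1 t : Set G))) ∧
      (∀ j, j ≠ i → M'.2 j = M.2 j) ∧
      M'.2 i = g₁ * M.2 i * g₂)

/-- Equivalence of `G`-tuples: a finite chain of elementary moves. -/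
def gEquiv {n m : ℕ} :
    (Fin n → Subgroup G) × (Fin m → G) → (Fin n → Subgroup G) × (Fin m → G) → Prop :=
  Relation.ReflTransGen gMove

/-- The family of factors `U₁,…,U_n, F(h₁),…,F(h_m)`. -/
def FF {n : ℕ} (m : ℕ) (U : Fin n → Subgroup G) : Fin n ⊕ Fin m → Type _
  | Sum.inl j => ↥(U j)
  | Sum.inr _ => FreeGroup PUnit

instance ffGroup {n : ℕ} (m : ℕ) (U : Fin n → Subgroup G) :
    (i : Fin n ⊕ Fin m) → Group (FF m U i)
  | Sum.inl j => inferInstanceAs (Group ↥(U j))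
  | Sum.inr _ => inferInstanceAs (Group (FreeGroup PUnit))

def ffHoms {n m : ℕ} (U : Fin n → Subgroup G) (H : Fin m → G) :
    (i : Fin n ⊕ Fin m) → FF m U i →* G
  | Sum.inl j => (U j).subtype
  | Sum.inr j => FreeGroup.lift fun _ => H j

/-- The canonical homomorphism `U₁ ∗ ⋯ ∗ U_n ∗ F(H) → G`. -/
def freeProdHom {n m : ℕ} (U : Fin n → Subgroup G) (H : Fin m → G) :
    Monoid.CoprodI (FF m U) →* G :=
  Monoid.CoprodI.lift (ffHoms U H)

/-- `W = U₁ ∗ ⋯ ∗ U_n ∗ F(H)`: the canonical homomorphism is injective with image `W`. -/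
def IsFreeProdDecomp {n m : ℕ} (U : Fin n → Subgroup G) (H : Fin m → G)
    (W : Subgroup G) : Prop :=
  Function.Injective (freeProdHom U H) ∧ (freeProdHom U H).range = W

/-- Minimality of the `G`-pair `(V; H)` (relative to a `1`-hyperbolic `G`-space `X`). -/
def PairMinimal (X : Type*) [MetricSpace X] [MulAction G X] {m : ℕ}
    (V : Subgroup G) (H : Fin m → G) : Prop :=
  ∀ (V' : Subgroup G) (H' : Fin m → G),
    gEquiv ((fun _ : Fin 1 => V), H) ((fun _ : Fin 1 => V'), H') →
    (∑ i, lV X 1 V (H i)) ≤ (∑ i, lV X 1 V' (H' i)) + 1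

/-- An elementary Nielsen move on tuples of elements of `G`. -/
def NielsenMove {k : ℕ} (g g' : Fin k → G) : Prop :=
  (∃ i : Fin k, (∀ j, j ≠ i → g' j = g j) ∧ g' i = (g i)⁻¹) ∨
  (∃ i j : Fin k, i ≠ j ∧ (∀ t, t ≠ i → g' t = g t) ∧ g' i = g i * g j) ∨
  (∃ i j : Fin k, i ≠ j ∧ g' = g ∘ Equiv.swap i j)

/-- Nielsen equivalence: a finite chain of elementary Nielsen moves. -/
def NielsenEq {k : ℕ} : (Fin k → G) → (Fin k → G) → Prop :=
  Relation.ReflTransGen NielsenMove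

/-- Word length of `g` with respect to the (symmetrized) generating set `S`. -/
def wordLength (S : Set G) (g : G) : ℕ :=
  sInf {n : ℕ | ∃ f : Fin n → G, (∀ i, f i ∈ S ∨ (f i)⁻¹ ∈ S) ∧ (List.ofFn f).prod = g}

/-- `(X, ι)` is a model of the Cayley graph `Γ(G,S)`. -/
def IsCayleyGraph (G : Type*) [Group G] (S : Set G) (X : Type*) [MetricSpace X]
    [MulAction G X] (ι : G → X) : Prop :=
  IsometricAction G X ∧
  (∀ g h : G, ι (g * h) = g • ι h) ∧
  Function.Injective ι ∧
  GeodesicSpace X ∧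
  (∀ g h : G, dist (ι g) (ι h) = (wordLength S (g⁻¹ * h) : ℝ)) ∧
  ∀ x : X, ∃ g h : G, wordLength S (g⁻¹ * h) ≤ 1 ∧
    ∃ s : Set X, IsGeodesicSegment s (ι g) (ι h) ∧ x ∈ s

/-- `H` is a quasiconvex subgroup (with respect to the Cayley graph model `(X, ι)`). -/
def QCSubgroup (X : Type*) [MetricSpace X] (ι : G → X) (H : Subgroup G) : Prop :=
  ∃ ε : ℝ, 0 ≤ ε ∧ Quasiconvex ε (ι '' (H : Set G))

end GroupAction

/-- Every nontrivial element of finite order has finite centralizer. -/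
def AlmostTorsionFree (G : Type*) [Group G] : Prop :=
  ∀ g : G, g ≠ 1 → IsOfFinOrder g → ((Subgroup.centralizer {g} : Subgroup G) : Set G).Finite

/-- `U` is nontrivial and admits no nontrivial free product decomposition. -/
def FreelyIndecomposable (U : Type*) [Group U] : Prop :=
  Nontrivial U ∧
    ¬ ∃ A B : Subgroup U, A ≠ ⊥ ∧ B ≠ ⊥ ∧
        Function.Bijective (Monoid.Coprod.lift A.subtype B.subtype)

def InfiniteCyclic (U : Type*) [Group U] : Prop := Infinite U ∧ IsCyclic U

def VirtuallyCyclic (U : Type*) [Group U] : Prop :=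
  ∃ H : Subgroup U, H.index ≠ 0 ∧ IsCyclic ↥H

def NonElementary (U : Type*) [Group U] : Prop := ¬ Finite U ∧ ¬ VirtuallyCyclic U

end KW

universe u v

namespace KW

open Pointwise Metric Set

section Helpers1

variable {X : Type*} [MetricSpace X]

theorem GeodParam.seg {f : ℝ → X} {L : ℝ} {x y : X} (h : GeodParam f L x y) :
    IsGeodesicSegment (f '' Set.Icc 0 L) x y :=
  ⟨L, f, h.1, h.2.1, h.2.2.1, h.2.2.2, rfl⟩

theorem exists_geodParam (hgeo : GeodesicSpace X) (x y : X) :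
    ∃ f : ℝ → X, GeodParam f (dist x y) x y := by
  obtain ⟨s, b, f, hb, h0, hb', hiso, rfl⟩ := hgeo x y
  have hbd : dist x y = b := by
    have h := hiso 0 ⟨le_refl 0, hb⟩ b ⟨hb, le_refl b⟩
    rw [h0, hb'] at h
    rw [h, abs_of_nonpos (by linarith)]; ring
  rw [hbd]
  exact ⟨f, hb, h0, hb', hiso⟩

theorem seg_dists {s : Set X} {x y : X} (h : IsGeodesicSegment s x y) {p : X} (hp : p ∈ s) :
    dist p x + dist p y = dist x y := by
  obtain ⟨b, f, hb, h0, hb', hiso, rfl⟩ := h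
  obtain ⟨t, ht, rfl⟩ := hp
  have h1 : dist (f t) x = t := by
    rw [← h0, hiso t ht 0 ⟨le_refl 0, hb⟩, sub_zero, abs_of_nonneg ht.1]
  have h2 : dist (f t) y = b - t := by
    rw [← hb', hiso t ht b ⟨hb, le_refl b⟩, abs_of_nonpos (by linarith [ht.2]), neg_sub]
  have h3 : dist x y = b := by
    rw [← h0, ← hb', hiso 0 ⟨le_refl 0, hb⟩ b ⟨hb, le_refl b⟩, abs_of_nonpos (by linarith),
      neg_sub, sub_zero]
  rw [h1, h2, h3]; ring

theorem IsGeodesicSegment.symm' {s : Set X} {x y : X} (h : IsGeodesicSegment s x y) :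
    IsGeodesicSegment s y x := by
  obtain ⟨b, f, hb, h0, hb', hiso, rfl⟩ := h
  refine ⟨b, fun t => f (b - t), hb, by simp [hb'], by simp [h0], ?_, ?_⟩
  · intro u hu v hv
    rw [hiso (b - u) ⟨by linarith [hu.2], by linarith [hu.1]⟩ (b - v)
      ⟨by linarith [hv.2], by linarith [hv.1]⟩]
    have hh : b - u - (b - v) = v - u := by ring
    rw [hh, abs_sub_comm]
  · ext z
    constructor
    · rintro ⟨t, ht, rfl⟩
      exact ⟨b - t, ⟨by linarith [ht.2], by linarith [ht.1]⟩,
        show f (b - (b - t)) = f t by rw [sub_sub_cancel]⟩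
    · rintro ⟨t, ht, rfl⟩
      exact ⟨b - t, ⟨by linarith [ht.2], by linarith [ht.1]⟩, rfl⟩

theorem IsGeodesicSegment.smul' {G : Type*} [Group G] [MulAction G X]
    (hiso : IsometricAction G X) (g : G) {s : Set X} {x y : X}
    (h : IsGeodesicSegment s x y) : IsGeodesicSegment (g • s) (g • x) (g • y) := by
  obtain ⟨b, f, hb, h0, hb', hgeo, rfl⟩ := h
  refine ⟨b, fun t => g • f t, hb, show g • f 0 = g • x by rw [h0],
    show g • f b = g • y by rw [hb'],
    fun u hu v hv => by rw [hiso, hgeo u hu v hv], ?_⟩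
  ext z
  constructor
  · rintro ⟨w, ⟨t, ht, rfl⟩, rfl⟩
    exact ⟨t, ht, rfl⟩
  · rintro ⟨t, ht, rfl⟩
    exact ⟨f t, ⟨t, ht, rfl⟩, rfl⟩

end Helpers1

section Helpers2

variable {X : Type*} [MetricSpace X]

theorem disp_along {G : Type*} [Group G] [MulAction G X] {δ D : ℝ}
    (hX : DeltaHyperbolic δ X) (hiso : IsometricAction G X) (u : G) {f : ℝ → X} {L : ℝ}
    {x y : X} (hf : GeodParam f L x y)
    (hx : dist x (u • x) ≤ D) (hy : dist y (u • y) ≤ D) :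
    ∀ t ∈ Set.Icc (0:ℝ) L, dist (f t) (u • f t) ≤ 4 * δ + 3 * D := by
  intro t ht
  have hD0 : 0 ≤ D := le_trans dist_nonneg hx
  have hδ0 : 0 ≤ δ := by
    obtain ⟨s₀, hs₀⟩ := hX.1 x x
    obtain ⟨q, _, hq⟩ := hX.2 x x x s₀ s₀ s₀ hs₀ hs₀ hs₀ x (by
      obtain ⟨b, g₀, hb, h0, _, _, rfl⟩ := hs₀
      exact ⟨0, ⟨le_refl 0, hb⟩, h0⟩)
    exact le_trans dist_nonneg hq
  have hs1 : IsGeodesicSegment (f '' Set.Icc 0 L) x y := hf.seg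
  obtain ⟨f₂, hf₂⟩ := exists_geodParam hX.1 y (u • y)
  obtain ⟨f₃, hf₃⟩ := exists_geodParam hX.1 x (u • y)
  obtain ⟨q, hq, hpq⟩ := hX.2 x y (u • y) _ _ _ hs1 hf₂.seg hf₃.seg (f t) ⟨t, ht, rfl⟩
  have hft : dist (f t) x = t := by
    rw [← hf.2.1, hf.2.2.2 t ht 0 ⟨le_refl 0, hf.1⟩, sub_zero, abs_of_nonneg ht.1]
  rcases hq with hq | hq
  · -- q on [y, u•y]
    have h1 : dist q y + dist q (u • y) = dist y (u • y) := seg_dists hf₂.seg hq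
    have h2 : dist (f t) y ≤ δ + D := by
      have := dist_triangle (f t) q y
      have h3 : dist q y ≤ dist y (u • y) := by linarith [dist_nonneg (x := q) (y := u • y)]
      linarith
    have h4 : dist (u • y) (u • f t) = dist (f t) y := by rw [hiso, dist_comm]
    have := dist_triangle4 (f t) y (u • y) (u • f t)
    linarith
  · -- q on [x, u•y] : second triangle x, u•y, u•x
    have hs2' : IsGeodesicSegment (u • (f '' Set.Icc 0 L)) (u • y) (u • x) :=
      hs1.symm'.smul' hiso u
    obtain ⟨f₄, hf₄⟩ := exists_geodParam hX.1 x (u • x)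
    obtain ⟨r, hr, hqr⟩ := hX.2 x (u • y) (u • x) _ _ _ hf₃.seg hs2' hf₄.seg q hq
    rcases hr with hr | hr
    · -- r ∈ u • [x,y]
      obtain ⟨z, hz, rfl⟩ := hr
      obtain ⟨s, hs, rfl⟩ := hz
      have h2 : dist (f t) (u • f s) ≤ 2 * δ :=
        le_trans (dist_triangle (f t) q (u • f s)) (by linarith)
      have hfs : dist (f s) x = s := by
        rw [← hf.2.1, hf.2.2.2 s hs 0 ⟨le_refl 0, hf.1⟩, sub_zero, abs_of_nonneg hs.1]
      have hux : dist (u • f s) (u • x) = s := by rw [hiso]; exact hfs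
      have hst1 : s ≤ t + (2 * δ + D) := by
        have := dist_triangle4 (u • f s) (f t) x (u • x)
        rw [hux] at this
        rw [dist_comm (u • f s) (f t)] at this
        linarith
      have hst2 : t ≤ s + (2 * δ + D) := by
        have := dist_triangle4 (f t) (u • f s) (u • x) x
        rw [dist_comm (u • x) x] at this
        have h5 : dist (u • f s) (u • x) = s := hux
        rw [h5] at this
        linarith
      have h6 : dist (u • f s) (u • f t) = |s - t| := by
        rw [hiso]; exact hf.2.2.2 s hs t ht
      have h7 : |s - t| ≤ 2 * δ + D := abs_sub_le_iff.mpr ⟨by linarith, by linarith⟩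
      have := dist_triangle (f t) (u • f s) (u • f t)
      linarith
    · -- r ∈ [x, u•x]
      have h1 : dist r x + dist r (u • x) = dist x (u • x) := seg_dists hf₄.seg hr
      have h2 : dist (f t) x ≤ 2 * δ + D := by
        have t1 := dist_triangle (f t) q r
        have t2 := dist_triangle (f t) r x
        have h3 : dist r x ≤ dist x (u • x) := by linarith [dist_nonneg (x := r) (y := u • x)]
        have t3 := dist_triangle (f t) q x
        linarith [dist_triangle q r x]
      have h4 : dist (u • x) (u • f t) = dist (f t) x := by rw [hiso, dist_comm]
      have := dist_triangle4 (f t) x (u • x) (u • f t)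
      linarith

theorem quasicenter {δ : ℝ} (hX : DeltaHyperbolic δ X)
    (Y : Set X) (hfin : Y.Finite) (hne : Y.Nonempty) :
    ∃ (r : ℝ) (x₁ : X), (∀ y ∈ Y, dist x₁ y ≤ r) ∧
      ∀ z w : X, (∀ y ∈ Y, dist z y ≤ r) → (∀ y ∈ Y, dist w y ≤ r) →
        dist z w ≤ 4 * δ + 2 := by
  classical
  set rad : X → ℝ := fun x => sSup ((fun y => dist x y) '' Y) with hrad
  have himg : ∀ x : X, ((fun y => dist x y) '' Y).Nonempty := fun x => hne.image _
  have hbdd : ∀ x : X, BddAbove ((fun y => dist x y) '' Y) := fun x => (hfin.image _).bddAbove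
  have hle : ∀ x : X, ∀ y ∈ Y, dist x y ≤ rad x := fun x y hy => le_csSup (hbdd x) ⟨y, hy, rfl⟩
  have hradle : ∀ (x : X) (B : ℝ), (∀ y ∈ Y, dist x y ≤ B) → rad x ≤ B := by
    intro x B hB
    refine csSup_le (himg x) ?_
    rintro b ⟨y, hy, rfl⟩
    exact hB y hy
  have hrng : (Set.range rad).Nonempty := ⟨rad hne.choose, hne.choose, rfl⟩
  have hbdd0 : BddBelow (Set.range rad) := by
    refine ⟨0, ?_⟩
    rintro b ⟨x, rfl⟩
    exact le_trans dist_nonneg (hle x hne.choose hne.choose_spec)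
  set r₀ := sInf (Set.range rad) with hr₀
  obtain ⟨b, ⟨x₁, rfl⟩, hx₁⟩ := exists_lt_of_csInf_lt hrng (lt_add_one r₀)
  refine ⟨r₀ + 1, x₁, fun y hy => le_trans (hle x₁ y hy) hx₁.le, ?_⟩
  intro z w hz hw
  obtain ⟨f, hf⟩ := exists_geodParam hX.1 z w
  set L := dist z w with hL
  have hL0 : 0 ≤ L := dist_nonneg
  have hm : L / 2 ∈ Set.Icc (0:ℝ) L := ⟨by positivity, by linarith⟩
  have hmz : dist (f (L / 2)) z = L / 2 := by
    rw [← hf.2.1, hf.2.2.2 (L/2) hm 0 ⟨le_refl 0, hL0⟩, sub_zero, abs_of_nonneg (by positivity)]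
  have hmw : dist (f (L / 2)) w = L / 2 := by
    rw [← hf.2.2.1, hf.2.2.2 (L/2) hm L ⟨hL0, le_refl L⟩,
      abs_of_nonpos (by linarith), neg_sub]
    ring
  have key : ∀ y ∈ Y, dist (f (L / 2)) y ≤ r₀ + 1 + 2 * δ - L / 2 := by
    intro y hy
    obtain ⟨f₂, hf₂⟩ := exists_geodParam hX.1 w y
    obtain ⟨f₃, hf₃⟩ := exists_geodParam hX.1 z y
    obtain ⟨q, hq, hmq⟩ := hX.2 z w y _ _ _ hf.seg hf₂.seg hf₃.seg (f (L / 2))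
      ⟨L / 2, hm, rfl⟩
    rcases hq with hq | hq
    · have h1 : dist q w + dist q y = dist w y := seg_dists hf₂.seg hq
      have h2 : dist q w ≥ L / 2 - δ := by
        have := dist_triangle (f (L/2)) q w
        rw [dist_comm q w] at this ⊢
        linarith [hmw ▸ this]
      have h3 : dist w y ≤ r₀ + 1 := hw y hy
      have := dist_triangle (f (L/2)) q y
      rw [dist_comm q w] at h1 h2
      linarith
    · have h1 : dist q z + dist q y = dist z y := seg_dists hf₃.seg hq
      have h2 : dist q z ≥ L / 2 - δ := by
        have := dist_triangle (f (L/2)) q z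
        linarith [hmz ▸ this]
      have h3 : dist z y ≤ r₀ + 1 := hz y hy
      have := dist_triangle (f (L/2)) q y
      linarith
  have h4 : r₀ ≤ r₀ + 1 + 2 * δ - L / 2 :=
    le_trans (csInf_le hbdd0 ⟨f (L / 2), rfl⟩) (hradle _ _ key)
  linarith

theorem orbit_center {G : Type*} [Group G] [MulAction G X] {δ : ℝ}
    (hX : DeltaHyperbolic δ X) (hiso : IsometricAction G X)
    (K : Subgroup G) (hK : (K : Set G).Finite) (x₀ : X) :
    ∃ x₁ : X, ∀ v ∈ K, dist x₁ (v • x₁) ≤ 4 * δ + 2 := by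
  have hKfin : ((fun k : G => k • x₀) '' (K : Set G)).Finite := hK.image _
  have hKne : ((fun k : G => k • x₀) '' (K : Set G)).Nonempty :=
    ⟨(1 : G) • x₀, ⟨1, K.one_mem, rfl⟩⟩
  obtain ⟨r, x₁, h1, h2⟩ := quasicenter hX _ hKfin hKne
  refine ⟨x₁, fun v hv => ?_⟩
  refine h2 x₁ (v • x₁) h1 ?_
  rintro y ⟨k, hk, rfl⟩
  show dist (v • x₁) (k • x₀) ≤ r
  have hrw : (k : G) • x₀ = v • ((v⁻¹ * k) • x₀) := by rw [smul_smul, mul_inv_cancel_left]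
  rw [hrw, hiso]
  exact h1 _ ⟨v⁻¹ * k, K.mul_mem (K.inv_mem hv) hk, rfl⟩

end Helpers2

section Helpers3

variable {X : Type*} [MetricSpace X]

theorem exists_word {G : Type*} [Group G] {S : Set G}
    (hgen : Subgroup.closure S = ⊤) (g : G) :
    ∃ l : List G, (∀ a ∈ l, a ∈ S ∨ a⁻¹ ∈ S) ∧ l.prod = g := by
  have hg : g ∈ Submonoid.closure (S ∪ S⁻¹) := by
    rw [← Subgroup.closure_toSubmonoid, hgen]
    exact Subgroup.mem_top g
  obtain ⟨l, hl, rfl⟩ := Submonoid.exists_list_of_mem_closure hg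
  refine ⟨l, fun a ha => ?_, rfl⟩
  rcases hl a ha with h | h
  · exact Or.inl h
  · exact Or.inr (Set.mem_inv.mp h)

theorem wordSet_nonempty {G : Type*} [Group G] {S : Set G}
    (hgen : Subgroup.closure S = ⊤) (g : G) :
    {m : ℕ | ∃ f : Fin m → G, (∀ i, f i ∈ S ∨ (f i)⁻¹ ∈ S) ∧ (List.ofFn f).prod = g}.Nonempty := by
  obtain ⟨l, hl, hpl⟩ := exists_word hgen g
  refine ⟨l.length, l.get, fun i => hl _ (l.get_mem _), ?_⟩
  rw [List.ofFn_get]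
  exact hpl

theorem ball_card {G : Type*} [Group G] (S : Finset G)
    (hgen : Subgroup.closure (S : Set G) = ⊤) (R : ℕ) :
    Finite {g : G // wordLength (S : Set G) g ≤ R} ∧
      Nat.card {g : G // wordLength (S : Set G) g ≤ R} ≤ (2 * S.card + 1) ^ R := by
  classical
  set A : Finset G := S ∪ S.image (·⁻¹) with hA
  have hW : ∀ g : G, ∃ f : ℕ → G,
      (∀ i, i < wordLength (S : Set G) g → f i ∈ A) ∧
      (List.ofFn fun i : Fin (wordLength (S : Set G) g) => f (i : ℕ)).prod = g := by
    intro g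
    obtain ⟨f₀, hf₀1, hf₀2⟩ : ∃ f₀ : Fin (wordLength (S : Set G) g) → G,
        (∀ i, f₀ i ∈ (S : Set G) ∨ (f₀ i)⁻¹ ∈ (S : Set G)) ∧ (List.ofFn f₀).prod = g :=
      Nat.sInf_mem (wordSet_nonempty hgen g)
    refine ⟨fun i => if h : i < wordLength (S : Set G) g then f₀ ⟨i, h⟩ else 1, ?_, ?_⟩
    · intro i hi
      show (if h : i < wordLength (S : Set G) g then f₀ ⟨i, h⟩ else 1) ∈ A
      rw [dif_pos hi]
      rcases hf₀1 ⟨i, hi⟩ with h | h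
      · exact Finset.mem_union_left _ h
      · exact Finset.mem_union_right _ (Finset.mem_image.mpr ⟨_, h, inv_inv _⟩)
    · have heq : (fun i : Fin (wordLength (S : Set G) g) =>
          (fun j : ℕ => if h : j < wordLength (S : Set G) g then f₀ ⟨j, h⟩ else 1) (i : ℕ)) =
          f₀ := by
        funext i
        show (if h : (i : ℕ) < wordLength (S : Set G) g then f₀ ⟨(i : ℕ), h⟩ else 1) = f₀ i
        rw [dif_pos i.isLt]
      rw [heq, hf₀2]
  choose wf hwf1 hwf2 using hW
  let e : {g : G // wordLength (S : Set G) g ≤ R} → (Fin R → Option {a : G // a ∈ A}) :=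
    fun gp i => if h : (i : ℕ) < wordLength (S : Set G) gp.1
      then some ⟨wf gp.1 (i : ℕ), hwf1 gp.1 (i : ℕ) h⟩ else none
  have key : ∀ (a b : G) (ha : wordLength (S : Set G) a ≤ R)
      (hb : wordLength (S : Set G) b ≤ R), e ⟨a, ha⟩ = e ⟨b, hb⟩ →
      wordLength (S : Set G) a ≤ wordLength (S : Set G) b := by
    intro a b ha hb hab
    by_contra hcon
    push_neg at hcon
    have h5 : e ⟨a, ha⟩ ⟨wordLength (S : Set G) b, lt_of_lt_of_le hcon ha⟩ =
        e ⟨b, hb⟩ ⟨wordLength (S : Set G) b, lt_of_lt_of_le hcon ha⟩ := by rw [hab]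
    have h6 : e ⟨a, ha⟩ ⟨wordLength (S : Set G) b, lt_of_lt_of_le hcon ha⟩ =
        some ⟨wf a (wordLength (S : Set G) b), hwf1 a _ hcon⟩ := dif_pos hcon
    have h7 : e ⟨b, hb⟩ ⟨wordLength (S : Set G) b, lt_of_lt_of_le hcon ha⟩ = none :=
      dif_neg (lt_irrefl _)
    rw [h6, h7] at h5
    exact Option.some_ne_none _ h5
  have hinj : Function.Injective e := by
    rintro ⟨g, hg⟩ ⟨g', hg'⟩ he
    have hlen : wordLength (S : Set G) g = wordLength (S : Set G) g' :=
      le_antisymm (key g g' hg hg' he) (key g' g hg' hg he.symm)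
    have hval : ∀ i : ℕ, i < wordLength (S : Set G) g → wf g i = wf g' i := by
      intro i hi
      have hiR : i < R := lt_of_lt_of_le hi hg
      have hi' : i < wordLength (S : Set G) g' := by rw [← hlen]; exact hi
      have h5 : e ⟨g, hg⟩ ⟨i, hiR⟩ = e ⟨g', hg'⟩ ⟨i, hiR⟩ := by rw [he]
      have h6 : e ⟨g, hg⟩ ⟨i, hiR⟩ = some ⟨wf g i, hwf1 g i hi⟩ := dif_pos hi
      have h7 : e ⟨g', hg'⟩ ⟨i, hiR⟩ = some ⟨wf g' i, hwf1 g' i hi'⟩ := dif_pos hi'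
      rw [h6, h7] at h5
      exact congrArg Subtype.val (Option.some.inj h5)
    apply Subtype.ext
    show g = g'
    rw [← hwf2 g, ← hwf2 g']
    have hof : (List.ofFn fun i : Fin (wordLength (S : Set G) g) => wf g (i : ℕ)) =
        List.ofFn fun i : Fin (wordLength (S : Set G) g') => wf g' (i : ℕ) := by
      rw [List.ofFn_congr hlen (fun i => wf g (i : ℕ))]
      congr 1
      funext i
      exact hval (i : ℕ) (by rw [hlen]; exact i.isLt)
    rw [hof]
  have hfin : Finite {g : G // wordLength (S : Set G) g ≤ R} := Finite.of_injective e hinj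
  refine ⟨hfin, ?_⟩
  have h1 : Nat.card {g : G // wordLength (S : Set G) g ≤ R} ≤
      Nat.card (Fin R → Option {a : G // a ∈ A}) := Nat.card_le_card_of_injective e hinj
  have h2 : Nat.card (Fin R → Option {a : G // a ∈ A}) = (A.card + 1) ^ R := by
    rw [Nat.card_fun]
    congr 1
    · rw [Nat.card_eq_fintype_card, Fintype.card_option, Fintype.card_coe]
    · rw [Nat.card_eq_fintype_card, Fintype.card_fin]
  have h3 : A.card ≤ 2 * S.card := by
    calc A.card ≤ S.card + (S.image (·⁻¹)).card := Finset.card_union_le _ _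
    _ ≤ S.card + S.card := by linarith [Finset.card_image_le (s := S) (f := (·⁻¹))]
    _ = 2 * S.card := by ring
  calc Nat.card {g : G // wordLength (S : Set G) g ≤ R} ≤ (A.card + 1) ^ R := h2 ▸ h1
  _ ≤ (2 * S.card + 1) ^ R := Nat.pow_le_pow_left (by omega) R

theorem near_lattice {G : Type*} [Group G] [MulAction G X] {S : Set G} {ι : G → X}
    (hCay : IsCayleyGraph G S X ι) (x : X) : ∃ g : G, dist x (ι g) ≤ 1 := by
  obtain ⟨g, h, hwl, s, hs, hxs⟩ := hCay.2.2.2.2.2 x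
  have hsum := seg_dists hs hxs
  have hlen : dist (ι g) (ι h) ≤ 1 := by
    rw [hCay.2.2.2.2.1]
    exact_mod_cast hwl
  exact ⟨g, by rw [dist_comm x (ι g)] at hsum ⊢; linarith [dist_nonneg (x := x) (y := ι h)]⟩

theorem geoConv_bound {D : ℝ} (hD : 0 ≤ D) {A : Set X} (hA : ∀ a ∈ A, ∀ b ∈ A, dist a b ≤ D)
    {x : X} (hx : x ∈ geoConv (Sum.inl '' A)) : ∃ a ∈ A, dist x a ≤ D := by
  rcases hx with ⟨a0, hA1, rfl⟩ | ⟨p, hp, q, hq, hpq, s, hs, hxs⟩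
  · have h1 : (Sum.inl x : X ⊕ Boundary X) ∈ Sum.inl '' A := by rw [hA1]; rfl
    obtain ⟨a', ha', he⟩ := h1
    have he' : a' = x := Sum.inl.inj he
    exact ⟨x, he' ▸ ha', by simpa using hD⟩
  · obtain ⟨a, ha, rfl⟩ := hp
    obtain ⟨b, hb, rfl⟩ := hq
    have hseg : IsGeodesicSegment s a b := hs
    have hsum := seg_dists hseg hxs
    exact ⟨a, ha, by linarith [dist_nonneg (x := x) (y := b), hA a ha b hb]⟩

theorem geoConv_pair {D : ℝ} (hD : 0 ≤ D) {A : Set X} (hA : ∀ a ∈ A, ∀ b ∈ A, dist a b ≤ D) :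
    ∀ x ∈ geoConv (Sum.inl '' A), ∀ y ∈ geoConv (Sum.inl '' A), dist x y ≤ 3 * D := by
  intro x hx y hy
  obtain ⟨a, ha, hxa⟩ := geoConv_bound hD hA hx
  obtain ⟨b, hb, hyb⟩ := geoConv_bound hD hA hy
  have := dist_triangle4 x a b y
  have hab := hA a ha b hb
  rw [dist_comm b y] at this
  linarith

theorem closure_pair {D : ℝ} {A : Set X} (hA : ∀ x ∈ A, ∀ y ∈ A, dist x y ≤ D) :
    ∀ x ∈ closure A, ∀ y ∈ closure A, dist x y ≤ D := by
  intro x hx y hy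
  by_contra h
  push_neg at h
  have hε : 0 < (dist x y - D) / 2 := by linarith
  obtain ⟨a, ha, hxa⟩ := Metric.mem_closure_iff.mp hx _ hε
  obtain ⟨b, hb, hyb⟩ := Metric.mem_closure_iff.mp hy _ hε
  have := dist_triangle4 x a b y
  have hab := hA a ha b hb
  rw [dist_comm b y] at this
  linarith

theorem limitSet_empty {G : Type*} [Group G] [MulAction G X]
    (U : Subgroup G) (hUfin : ((U : Set G)).Finite) :
    limitSet (G := G) X U = ∅ := by
  ext p
  simp only [Set.mem_empty_iff_false, iff_false]
  rintro ⟨x₀, u, γ, hγp, hM⟩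
  have hfinU : Finite ↥(U : Set G) := hUfin.to_subtype
  have hfinU' : Finite ↥U := Finite.of_injective
    (fun v : ↥U => (⟨v.1, v.2⟩ : ↥(U : Set G))) (fun a b hab => by
      apply Subtype.ext
      exact congrArg Subtype.val hab)
  obtain ⟨C, hC⟩ := Set.Finite.bddAbove
    (Set.finite_range fun v : ↥U => dist ((v : G) • x₀) x₀)
  obtain ⟨N, hN⟩ := hM (C + 1)
  have h1 : C + 1 ≤ gromov x₀ ((u N : G) • x₀) (γ.1 (N : ℝ)) := hN N le_rfl N le_rfl
  have h2 : gromov x₀ ((u N : G) • x₀) (γ.1 (N : ℝ)) ≤ dist ((u N : G) • x₀) x₀ := by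
    unfold gromov
    have ht := dist_triangle (γ.1 (N : ℝ)) ((u N : G) • x₀) x₀
    rw [dist_comm (γ.1 (N : ℝ)) ((u N : G) • x₀)] at ht
    linarith
  have h3 : dist ((u N : G) • x₀) x₀ ≤ C := hC ⟨u N, rfl⟩
  linarith

end Helpers3

section Helpers4

variable {X : Type*} [MetricSpace X]

theorem subgroup_card {G : Type*} [Group G] [MulAction G X]
    {δ : ℕ} (S : Finset G) (ι : G → X)
    (hgen : Subgroup.closure (S : Set G) = ⊤)
    (hCay : IsCayleyGraph G (S : Set G) X ι) (hX : DeltaHyperbolic (δ : ℝ) X)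
    (K : Subgroup G) (hK : ((K : Set G)).Finite) :
    Nat.card {c : G // c ∈ K} ≤ (2 * S.card + 1) ^ (4 * δ + 4) := by
  obtain ⟨hiso, hmul, hinj, hgeo, hdist, hnearp⟩ := hCay
  obtain ⟨x₁, hx₁⟩ := orbit_center hX hiso K hK (ι 1)
  obtain ⟨g, hg⟩ := near_lattice ⟨hiso, hmul, hinj, hgeo, hdist, hnearp⟩ x₁
  have hwl : ∀ c : G, c ∈ K → wordLength (S : Set G) (g⁻¹ * c * g) ≤ 4 * δ + 4 := by
    intro c hc
    have h1 : dist (ι g) (c • ι g) ≤ (4 * (δ : ℝ) + 2) + 2 := by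
      have t := dist_triangle4 (ι g) x₁ (c • x₁) (c • ι g)
      have h2 : dist (c • x₁) (c • ι g) = dist x₁ (ι g) := hiso c x₁ (ι g)
      rw [h2, dist_comm (ι g) x₁] at t
      linarith [hx₁ c hc, hg]
    have h3 : c • ι g = ι (c * g) := (hmul c g).symm
    rw [h3, hdist g (c * g)] at h1
    have h4 : g⁻¹ * (c * g) = g⁻¹ * c * g := (mul_assoc _ _ _).symm
    rw [h4] at h1
    have h5 : ((wordLength (S : Set G) (g⁻¹ * c * g) : ℕ) : ℝ) ≤ ((4 * δ + 4 : ℕ) : ℝ) := by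
      push_cast
      linarith
    exact_mod_cast h5
  obtain ⟨hBfin, hBcard⟩ := ball_card S hgen (4 * δ + 4)
  haveI := hBfin
  let φ : {c : G // c ∈ K} → {h : G // wordLength (S : Set G) h ≤ 4 * δ + 4} :=
    fun c => ⟨g⁻¹ * c.1 * g, hwl c.1 c.2⟩
  have hφ : Function.Injective φ := by
    intro c c' h
    have h1 : g⁻¹ * c.1 * g = g⁻¹ * c'.1 * g := congrArg Subtype.val h
    exact Subtype.ext (mul_left_cancel (mul_right_cancel h1))
  exact le_trans (Nat.card_le_card_of_injective φ hφ) hBcard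

theorem Ew_bound {G : Type*} [Group G] [MulAction G X]
    {δ : ℕ} (S : Finset G) (ι : G → X)
    (hgen : Subgroup.closure (S : Set G) = ⊤)
    (hCay : IsCayleyGraph G (S : Set G) X ι) (hX : DeltaHyperbolic (δ : ℝ) X)
    (hAT : AlmostTorsionFree G)
    (w : G) (hw : w ≠ 1) (hfo : IsOfFinOrder w)
    {x y : X} (hx : dist x (w • x) ≤ 100 * (δ : ℝ)) (hy : dist y (w • y) ≤ 100 * (δ : ℝ)) :
    dist x y ≤
      3 * (((2 * S.card + 1) ^ (304 * δ + 2) * (2 * S.card + 1) ^ (4 * δ + 4) : ℕ) : ℝ) := by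
  classical
  obtain ⟨hiso, hmul, hinj, hgeo, hdist, hnearp⟩ := hCay
  have hCay' : IsCayleyGraph G (S : Set G) X ι := ⟨hiso, hmul, hinj, hgeo, hdist, hnearp⟩
  have hCfin : (((Subgroup.centralizer {w} : Subgroup G) : Set G)).Finite := hAT w hw hfo
  have hCcard : Nat.card {c : G // c ∈ Subgroup.centralizer {w}} ≤
      (2 * S.card + 1) ^ (4 * δ + 4) := subgroup_card S ι hgen hCay' hX _ hCfin
  obtain ⟨hBfin, hBcard⟩ := ball_card S hgen (304 * δ + 2)
  haveI := hBfin
  haveI hCsub : Finite {c : G // c ∈ Subgroup.centralizer {w}} := by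
    haveI := hCfin.to_subtype
    exact Finite.of_injective (fun c : {c : G // c ∈ Subgroup.centralizer {w}} =>
      (⟨c.1, c.2⟩ : ↥(((Subgroup.centralizer {w} : Subgroup G) : Set G))))
      (fun a b hab => Subtype.ext (congrArg Subtype.val hab))
  set rep : G → G := fun h => if hh : ∃ a : G, a⁻¹ * w * a = h then hh.choose else 1 with hrepdef
  have hrep : ∀ h a : G, a⁻¹ * w * a = h → (rep h)⁻¹ * w * rep h = h := by
    intro h a ha
    have hh : ∃ a : G, a⁻¹ * w * a = h := ⟨a, ha⟩
    show (if hh' : ∃ a : G, a⁻¹ * w * a = h then hh'.choose else 1)⁻¹ * w *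
      (if hh' : ∃ a : G, a⁻¹ * w * a = h then hh'.choose else 1) = h
    rw [dif_pos hh]
    exact hh.choose_spec
  let T := {g : G // wordLength (S : Set G) (g⁻¹ * w * g) ≤ 304 * δ + 2}
  let φ : T → {h : G // wordLength (S : Set G) h ≤ 304 * δ + 2} ×
      {c : G // c ∈ Subgroup.centralizer {w}} :=
    fun g => ⟨⟨g.1⁻¹ * w * g.1, g.2⟩, ⟨g.1 * (rep (g.1⁻¹ * w * g.1))⁻¹, by
      have ha := hrep (g.1⁻¹ * w * g.1) g.1 rfl
      rw [Subgroup.mem_centralizer_iff]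
      intro h' hh'
      rw [Set.mem_singleton_iff] at hh'
      rw [hh']
      have hcalc : (g.1 * (rep (g.1⁻¹ * w * g.1))⁻¹) * w = w * (g.1 * (rep (g.1⁻¹ * w * g.1))⁻¹) := by
        set a := rep (g.1⁻¹ * w * g.1) with hadef
        calc (g.1 * a⁻¹) * w = g.1 * ((a⁻¹ * w * a) * a⁻¹) := by group
        _ = g.1 * ((g.1⁻¹ * w * g.1) * a⁻¹) := by rw [ha]
        _ = w * (g.1 * a⁻¹) := by group
      exact hcalc.symm⟩⟩
  have hφinj : Function.Injective φ := by
    rintro ⟨g, hg⟩ ⟨g', hg'⟩ he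
    have h1 : g⁻¹ * w * g = g'⁻¹ * w * g' := congrArg (fun p => p.1.1) he
    have h2 : g * (rep (g⁻¹ * w * g))⁻¹ = g' * (rep (g'⁻¹ * w * g'))⁻¹ :=
      congrArg (fun p => p.2.1) he
    rw [← h1] at h2
    exact Subtype.ext (mul_right_cancel h2)
  haveI hTfin : Finite T := Finite.of_injective φ hφinj
  have hTcard : Nat.card T ≤
      (2 * S.card + 1) ^ (304 * δ + 2) * (2 * S.card + 1) ^ (4 * δ + 4) := by
    refine le_trans (Nat.card_le_card_of_injective φ hφinj) ?_
    rw [Nat.card_prod]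
    exact Nat.mul_le_mul hBcard hCcard
  obtain ⟨f, hf⟩ := exists_geodParam hX.1 x y
  set L := dist x y with hL
  have hL0 : 0 ≤ L := dist_nonneg
  have hdisp := disp_along hX hiso w hf hx hy
  have hlat : ∀ k : ℕ, ∃ g : G, dist (f (3 * (k : ℝ))) (ι g) ≤ 1 :=
    fun k => near_lattice hCay' _
  choose gk hgk using hlat
  have hTmem : ∀ k : ℕ, 3 * (k : ℝ) ≤ L →
      wordLength (S : Set G) ((gk k)⁻¹ * w * gk k) ≤ 304 * δ + 2 := by
    intro k hk
    have hmem : 3 * (k : ℝ) ∈ Set.Icc (0 : ℝ) L := ⟨by positivity, hk⟩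
    have h1 := hdisp _ hmem
    have h2 : dist (ι (gk k)) (w • ι (gk k)) ≤ 304 * (δ : ℝ) + 2 := by
      have t := dist_triangle4 (ι (gk k)) (f (3 * (k : ℝ))) (w • f (3 * (k : ℝ))) (w • ι (gk k))
      have e1 : dist (w • f (3 * (k : ℝ))) (w • ι (gk k)) = dist (f (3 * (k : ℝ))) (ι (gk k)) :=
        hiso w _ _
      rw [e1, dist_comm (ι (gk k)) (f (3 * (k : ℝ)))] at t
      linarith [hgk k]
    rw [← hmul w (gk k), hdist (gk k) (w * gk k)] at h2
    have h4 : (gk k)⁻¹ * (w * gk k) = (gk k)⁻¹ * w * gk k := (mul_assoc _ _ _).symm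
    rw [h4] at h2
    have h5 : ((wordLength (S : Set G) ((gk k)⁻¹ * w * gk k) : ℕ) : ℝ) ≤
        ((304 * δ + 2 : ℕ) : ℝ) := by
      push_cast
      linarith
    exact_mod_cast h5
  set Kn := Nat.floor (L / 3) with hKn
  have h3k : ∀ k : ℕ, k ≤ Kn → 3 * (k : ℝ) ≤ L := by
    intro k hk
    have h1 : (k : ℝ) ≤ (Kn : ℝ) := Nat.cast_le.mpr hk
    have h2 : (Kn : ℝ) ≤ L / 3 := Nat.floor_le (by positivity)
    linarith
  let ψ : Fin (Kn + 1) → T := fun k => ⟨gk (k : ℕ), hTmem (k : ℕ) (h3k _ (Nat.lt_succ_iff.mp k.isLt))⟩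
  have hψinj : Function.Injective ψ := by
    intro k k' he
    have hgg : gk (k : ℕ) = gk (k' : ℕ) := congrArg Subtype.val he
    by_contra hne
    have hkk : (k : ℕ) ≠ (k' : ℕ) := fun h => hne (Fin.ext h)
    have h1 : dist (f (3 * ((k : ℕ) : ℝ))) (f (3 * ((k' : ℕ) : ℝ))) ≤ 2 := by
      have t := dist_triangle (f (3 * ((k : ℕ) : ℝ))) (ι (gk (k : ℕ))) (f (3 * ((k' : ℕ) : ℝ)))
      rw [hgg, dist_comm (ι (gk (k' : ℕ))) (f (3 * ((k' : ℕ) : ℝ)))] at t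
      have hga : dist (f (3 * ((k : ℕ) : ℝ))) (ι (gk (k' : ℕ))) ≤ 1 := by
        rw [← hgg]; exact hgk (k : ℕ)
      linarith [hga, hgk (k' : ℕ)]
    have hm1 : 3 * ((k : ℕ) : ℝ) ∈ Set.Icc (0 : ℝ) L :=
      ⟨by positivity, h3k _ (Nat.lt_succ_iff.mp k.isLt)⟩
    have hm2 : 3 * ((k' : ℕ) : ℝ) ∈ Set.Icc (0 : ℝ) L :=
      ⟨by positivity, h3k _ (Nat.lt_succ_iff.mp k'.isLt)⟩
    rw [hf.2.2.2 _ hm1 _ hm2] at h1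
    have key : ∀ a b : ℕ, a < b → (1 : ℝ) ≤ |(a : ℝ) - (b : ℝ)| := by
      intro a b hab
      rw [abs_sub_comm, abs_of_nonneg (sub_nonneg.mpr (Nat.cast_le.mpr hab.le))]
      have hab' : (a : ℝ) + 1 ≤ b := by exact_mod_cast hab
      linarith
    have h6 : (1 : ℝ) ≤ |((k : ℕ) : ℝ) - ((k' : ℕ) : ℝ)| := by
      rcases lt_or_gt_of_ne hkk with h | h
      · exact key _ _ h
      · rw [abs_sub_comm]
        exact key _ _ h
    have h7 : 3 * ((k : ℕ) : ℝ) - 3 * ((k' : ℕ) : ℝ) = 3 * (((k : ℕ) : ℝ) - ((k' : ℕ) : ℝ)) := by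
      ring
    rw [h7, abs_mul, abs_of_nonneg (by norm_num : (0:ℝ) ≤ 3)] at h1
    linarith
  have hfin2 : Kn + 1 ≤ Nat.card T := by
    have h := Nat.card_le_card_of_injective ψ hψinj
    simpa using h
  have hlt : L / 3 < (Kn : ℝ) + 1 := Nat.lt_floor_add_one _
  have hcast : ((Kn : ℝ) + 1) ≤
      (((2 * S.card + 1) ^ (304 * δ + 2) * (2 * S.card + 1) ^ (4 * δ + 4) : ℕ) : ℝ) := by
    exact_mod_cast le_trans hfin2 hTcard
  linarith

theorem E_bound {G : Type*} [Group G] [MulAction G X]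
    {δ : ℕ} (hδ1 : 1 ≤ δ) (S : Finset G) (ι : G → X)
    (hgen : Subgroup.closure (S : Set G) = ⊤)
    (hCay : IsCayleyGraph G (S : Set G) X ι) (hX : DeltaHyperbolic (δ : ℝ) X)
    (hAT : AlmostTorsionFree G)
    (U : Subgroup G) (hUfin : ((U : Set G)).Finite) :
    ∀ a ∈ smallDispSet X (δ : ℝ) U, ∀ b ∈ smallDispSet X (δ : ℝ) U,
      dist a b ≤
        2 * (3 * (((2 * S.card + 1) ^ (304 * δ + 2) * (2 * S.card + 1) ^ (4 * δ + 4) : ℕ) : ℝ)) := by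
  intro a ha b hb
  obtain ⟨ua, hua, huane, hda⟩ := ha
  obtain ⟨ub, hub, hubne, hdb⟩ := hb
  obtain ⟨x₁, hx₁⟩ := orbit_center hX hCay.1 U hUfin (ι 1)
  haveI hfinU' : Finite ↥U := by
    haveI := hUfin.to_subtype
    exact Finite.of_injective (fun v : ↥U => (⟨v.1, v.2⟩ : ↥((U : Set G))))
      (fun a b hab => Subtype.ext (congrArg Subtype.val hab))
  have hfo : ∀ v : G, v ∈ U → IsOfFinOrder v := by
    intro v hv
    have h1 : IsOfFinOrder (⟨v, hv⟩ : U) := isOfFinOrder_of_finite _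
    have h2 : orderOf (⟨v, hv⟩ : U) = orderOf v := Subgroup.orderOf_mk v hv
    have h3 : 0 < orderOf v := by rw [← h2]; exact h1.orderOf_pos
    exact orderOf_pos_iff.mp h3
  have hδR : (1 : ℝ) ≤ (δ : ℝ) := by exact_mod_cast hδ1
  have hxa : dist x₁ (ua • x₁) ≤ 100 * (δ : ℝ) := by
    have := hx₁ ua hua
    linarith
  have hxb : dist x₁ (ub • x₁) ≤ 100 * (δ : ℝ) := by
    have := hx₁ ub hub
    linarith
  have h1 : dist a x₁ ≤
      3 * (((2 * S.card + 1) ^ (304 * δ + 2) * (2 * S.card + 1) ^ (4 * δ + 4) : ℕ) : ℝ) :=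
    Ew_bound S ι hgen hCay hX hAT ua huane (hfo ua hua) hda hxa
  have h2 : dist b x₁ ≤
      3 * (((2 * S.card + 1) ^ (304 * δ + 2) * (2 * S.card + 1) ^ (4 * δ + 4) : ℕ) : ℝ) :=
    Ew_bound S ι hgen hCay hX hAT ub hubne (hfo ub hub) hdb hxb
  have := dist_triangle a x₁ b
  rw [dist_comm x₁ b] at this
  linarith

end Helpers4

theorem statement14 (n δ : ℕ) (hn : 1 ≤ n) (hδ : 1 ≤ δ) :
    ∃ c : ℝ, 0 ≤ c ∧ ∀ (G : Type u) (X : Type v)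
      [Group G] [MetricSpace X] [MulAction G X] (S : Finset G) (ι : G → X),
      S.card = n → Subgroup.closure (S : Set G) = ⊤ →
      IsCayleyGraph G (S : Set G) X ι → DeltaHyperbolic (δ : ℝ) X →
      AlmostTorsionFree G →
      ∀ U : Subgroup G, U ≠ ⊥ → ((U : Set G)).Finite →
        ∀ x ∈ cHull X (δ : ℝ) U, ∀ y ∈ cHull X (δ : ℝ) U, dist x y ≤ c := by
  refine ⟨18 * (3 * (((2 * n + 1) ^ (304 * δ + 2) * (2 * n + 1) ^ (4 * δ + 4) : ℕ) : ℝ)),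
    by positivity, ?_⟩
  intro G X _ _ _ S ι hcard hgen hCay hX hAT U hUne hUfin x hx y hy
  have hE : ∀ a ∈ smallDispSet X (δ : ℝ) U, ∀ b ∈ smallDispSet X (δ : ℝ) U,
      dist a b ≤
        2 * (3 * (((2 * n + 1) ^ (304 * δ + 2) * (2 * n + 1) ^ (4 * δ + 4) : ℕ) : ℝ)) := by
    have h := E_bound hδ S ι hgen hCay hX hAT U hUfin
    rw [hcard] at h
    exact h
  have hZeq : ZSet X (δ : ℝ) U = geoConv (Sum.inl '' smallDispSet X (δ : ℝ) U) := by
    unfold ZSet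
    rw [limitSet_empty (X := X) U hUfin, Set.image_empty, Set.empty_union]
  set D : ℝ := 2 * (3 * (((2 * n + 1) ^ (304 * δ + 2) * (2 * n + 1) ^ (4 * δ + 4) : ℕ) : ℝ))
    with hD
  have hD0 : (0 : ℝ) ≤ D := by positivity
  have hZ : ∀ a ∈ ZSet X (δ : ℝ) U, ∀ b ∈ ZSet X (δ : ℝ) U, dist a b ≤ 3 * D := by
    rw [hZeq]
    exact geoConv_pair hD0 hE
  have hG2 := geoConv_pair (by positivity : (0 : ℝ) ≤ 3 * D) hZ
  have hfinal := closure_pair hG2 x hx y hy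
  calc dist x y ≤ 3 * (3 * D) := hfinal
  _ = 18 * (3 * (((2 * n + 1) ^ (304 * δ + 2) * (2 * n + 1) ^ (4 * δ + 4) : ℕ) : ℝ)) := by
    rw [hD]; ring

end KW
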